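/- arXiv:math/0510434 — 4 statements merged into one kernel-verified Lean document; each statement's English description precedes it below -/
import Mathlib

section
/- Let K be an algebraically closed field and f = p/q a rational function in n ≥ 2 variables with gcd(p,q) = 1. If f is composite, i.e., f = r ∘ g for some univariate rational function r of degree ≥ 2 and some g ∈ K(x₁,...,xₙ), then for every λ ∈ K ∪ {∞} with deg(p - λq) = deg f, the polynomial p - λq is reducible in K[x₁,...,xₙ]. -/
open MvPolynomial

noncomputable section
variable {K : Type*} [Field K]

abbrev Lf (n : ℕ) (K : Type*) [Field K] := FractionRing (MvPolynomial (Fin n) K)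

def pencil {n : ℕ} (p q : MvPolynomial (Fin n) K) : Option K → MvPolynomial (Fin n) K
  | none => q
  | some l => p - C l * q

def ratι (n : ℕ) (K : Type*) [Field K] : K →+* Lf n K :=
  (algebraMap (MvPolynomial (Fin n) K) (Lf n K)).comp (MvPolynomial.C : K →+* MvPolynomial (Fin n) K)

def IsComposite {n : ℕ} (f : Lf n K) : Prop :=
  ∃ (a b : Polynomial K) (g : Lf n K),
    IsCoprime a b ∧ 2 ≤ max a.natDegree b.natDegree ∧
    Polynomial.eval₂ (ratι n K) g b ≠ 0 ∧
    f = Polynomial.eval₂ (ratι n K) g a / Polynomial.eval₂ (ratι n K) g b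

def jacZero (a b u v : MvPolynomial (Fin 2) K) : Prop :=
  (b * pderiv 0 a - a * pderiv 0 b) * (v * pderiv 1 u - u * pderiv 1 v)
    = (b * pderiv 1 a - a * pderiv 1 b) * (v * pderiv 0 u - u * pderiv 0 v)

def DZero (f g : Lf 2 K) : Prop :=
  ∃ a b u v : MvPolynomial (Fin 2) K, b ≠ 0 ∧ v ≠ 0 ∧
    f = algebraMap _ _ a / algebraMap _ _ b ∧ g = algebraMap _ _ u / algebraMap _ _ v ∧
    jacZero a b u v

def fdeg {n : ℕ} (g : Lf n K) : ℕ :=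
  sInf {m | ∃ u v : MvPolynomial (Fin n) K, v ≠ 0 ∧
    g = algebraMap _ _ u / algebraMap _ _ v ∧ m = max u.totalDegree v.totalDegree}

def nfac {n : ℕ} (P : MvPolynomial (Fin n) K) : ℕ :=
  sSup {m | ∃ S : Finset (MvPolynomial (Fin n) K), S.card = m ∧
    (∀ F ∈ S, Irreducible F ∧ F ∣ P) ∧
    (S : Set (MvPolynomial (Fin n) K)).Pairwise fun a b => ¬ Associated a b}

/-! ### Auxiliary lemmas for `stmt0` -/

section DegreeLemmas

variable {σ : Type*} {R : Type*} [CommRing R] [IsDomain R]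

omit [IsDomain R] in
lemma my_top_ne_zero {p : MvPolynomial σ R} (hp : p ≠ 0) :
    homogeneousComponent p.totalDegree p ≠ 0 := by
  obtain ⟨m, hm, hms⟩ := Finset.exists_mem_eq_sup p.support
    (support_nonempty.2 hp) (fun s => s.sum fun _ e => e)
  intro h0
  have := coeff_homogeneousComponent (σ := σ) p.totalDegree p m
  rw [h0] at this
  have hdeg : m.degree = p.totalDegree := by
    rw [Finsupp.degree_apply]
    simpa [Finsupp.sum, totalDegree] using hms.symm
  rw [if_pos hdeg] at this
  exact (mem_support_iff.1 hm) this.symm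

lemma my_totalDegree_mul {p q : MvPolynomial σ R} (hp : p ≠ 0) (hq : q ≠ 0) :
    (p * q).totalDegree = p.totalDegree + q.totalDegree := by
  classical
  refine le_antisymm (totalDegree_mul p q) ?_
  set a := p.totalDegree
  set b := q.totalDegree
  set P := homogeneousComponent a p with hP
  set Q := homogeneousComponent b q with hQ
  have hPQ : P * Q ≠ 0 := mul_ne_zero (my_top_ne_zero hp) (my_top_ne_zero hq)
  have hhom : (P * Q).IsHomogeneous (a + b) :=
    (homogeneousComponent_isHomogeneous a p).mul (homogeneousComponent_isHomogeneous b q)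
  obtain ⟨d, hd⟩ := ne_zero_iff.1 hPQ
  have hdd : d.degree = a + b := by
    rw [Finsupp.degree_eq_weight_one]; exact hhom hd
  have hdegle : ∀ (i : σ →₀ ℕ) (f : MvPolynomial σ R), f.totalDegree < i.degree →
      coeff i f = 0 := by
    intro i f hi
    apply coeff_eq_zero_of_totalDegree_lt
    simpa [Finsupp.degree_apply, Finsupp.sum] using hi
  have hco : coeff d (p * q) = coeff d (P * Q) := by
    rw [coeff_mul, coeff_mul]
    apply Finset.sum_congr rfl
    rintro ⟨i, j⟩ hij
    rw [Finset.HasAntidiagonal.mem_antidiagonal] at hij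
    have hsum : i.degree + j.degree = a + b := by
      have degadd : (i + j).degree = i.degree + j.degree := by
        simp [Finsupp.degree_eq_weight_one, map_add]
      rw [← degadd, hij, hdd]
    simp only [hP, hQ, coeff_homogeneousComponent]
    by_cases hia : i.degree = a
    · have hjb : j.degree = b := by omega
      rw [if_pos hia, if_pos hjb]
    · rw [if_neg hia]
      rcases lt_or_gt_of_ne hia with hlt | hgt
      · have hjb : b < j.degree := by omega
        rw [hdegle j q hjb]
        simp
      · rw [hdegle i p hgt, zero_mul, zero_mul]
  have hne : coeff d (p * q) ≠ 0 := by rw [hco]; exact hd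
  have := le_totalDegree (p := p * q) (s := d) (mem_support_iff.2 hne)
  calc a + b = d.degree := hdd.symm
    _ = d.sum fun _ e => e := by rw [Finsupp.degree]; rfl
    _ ≤ (p * q).totalDegree := this

lemma my_totalDegree_prod (S : Multiset (MvPolynomial σ R)) (hS : ∀ x ∈ S, x ≠ 0) :
    S.prod.totalDegree = (S.map totalDegree).sum := by
  induction S using Multiset.induction with
  | empty => simp
  | cons x S ih =>
    have hx : x ≠ 0 := hS x (Multiset.mem_cons_self x S)
    have hS' : ∀ y ∈ S, y ≠ 0 := fun y hy => hS y (Multiset.mem_cons_of_mem hy)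
    have hprod : S.prod ≠ 0 := Multiset.prod_ne_zero (fun h0 => hS' 0 h0 rfl)
    rw [Multiset.prod_cons, my_totalDegree_mul hx hprod, ih hS', Multiset.map_cons,
      Multiset.sum_cons]

lemma my_unit_totalDegree {x : MvPolynomial σ R} (hx : IsUnit x) : x.totalDegree = 0 := by
  obtain ⟨y, hy⟩ := hx.exists_right_inv
  have h1 : (1 : MvPolynomial σ R) ≠ 0 := one_ne_zero
  have hx0 : x ≠ 0 := fun h => h1 (by rw [← hy, h, zero_mul])
  have hy0 : y ≠ 0 := fun h => h1 (by rw [← hy, h, mul_zero])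
  have := my_totalDegree_mul hx0 hy0
  rw [hy, totalDegree_one] at this
  omega

lemma my_assoc_totalDegree {x y : MvPolynomial σ R} (h : Associated x y) :
    x.totalDegree = y.totalDegree := by
  obtain ⟨u, rfl⟩ := h
  rcases eq_or_ne x 0 with rfl | hx
  · simp
  · have hu : (u : MvPolynomial σ R) ≠ 0 := u.isUnit.ne_zero
    rw [my_totalDegree_mul hx hu, my_unit_totalDegree u.isUnit, add_zero]

lemma my_eq_C {x : MvPolynomial σ R} (hx : x.totalDegree = 0) : x = C (coeff 0 x) := by
  classical
  ext d
  rcases eq_or_ne d 0 with rfl | hd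
  · simp
  · rw [coeff_C, if_neg (Ne.symm hd)]
    by_contra hne
    have hle := le_totalDegree (p := x) (s := d) (mem_support_iff.2 hne)
    rw [hx, Nat.le_zero] at hle
    exact hd ((Finsupp.degree_eq_zero_iff d).mp hle)

end DegreeLemmas

section FieldLemmas

variable {σ : Type*} (u v : MvPolynomial σ K)

lemma my_not_irred {x : MvPolynomial σ K} (hx : x.totalDegree = 0) : ¬ Irreducible x := by
  intro h
  rcases eq_or_ne (coeff 0 x) 0 with h0 | h0
  · rw [my_eq_C hx, h0, map_zero] at h
    exact not_irreducible_zero h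
  · exact h.not_isUnit (my_eq_C hx ▸ IsUnit.map (C : K →+* MvPolynomial σ K)
      (isUnit_iff_ne_zero.mpr h0))

lemma my_relprime_unit_left {x y : MvPolynomial σ K} (h : IsUnit x) : IsRelPrime x y :=
  fun _ hz _ => isUnit_of_dvd_unit hz h

lemma my_relprime_prod_left {S : Multiset (MvPolynomial σ K)} {y : MvPolynomial σ K}
    (h : ∀ x ∈ S, IsRelPrime x y) : IsRelPrime S.prod y := by
  induction S using Multiset.induction with
  | empty => simpa using isRelPrime_one_left
  | cons x S ih =>
    rw [Multiset.prod_cons]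
    exact (h x (Multiset.mem_cons_self x S)).mul_left
      (ih fun z hz => h z (Multiset.mem_cons_of_mem hz))

lemma my_units_prod {S : Multiset (MvPolynomial σ K)} (h : ∀ x ∈ S, IsUnit x) :
    IsUnit S.prod := by
  induction S using Multiset.induction with
  | empty => simp
  | cons x S ih =>
    rw [Multiset.prod_cons]
    exact (h x (Multiset.mem_cons_self x S)).mul
      (ih fun z hz => h z (Multiset.mem_cons_of_mem hz))

/-- The "slot" factor: `none` corresponds to the point at infinity (factor `v`),
`some r` to the root `r` (factor `u - r v`). -/
def slotF : Option K → MvPolynomial σ K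
  | none => v
  | some r => u - C r * v

lemma slotF_deg_le (s : Option K) :
    (slotF u v s).totalDegree ≤ max u.totalDegree v.totalDegree := by
  cases s with
  | none => exact le_max_right _ _
  | some r =>
    refine le_trans (totalDegree_sub u (C r * v)) ?_
    have : (C r * v).totalDegree ≤ v.totalDegree := by
      simpa using totalDegree_mul (C r) v
    omega

lemma slotF_pair_deg {s s' : Option K} (h : s ≠ s') :
    max u.totalDegree v.totalDegree
      ≤ max (slotF u v s).totalDegree (slotF u v s').totalDegree := by
  have key : ∀ s₁ s₂ : Option K, s₁ ≠ s₂ →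
      max u.totalDegree v.totalDegree
        ≤ max (slotF u v s₁).totalDegree (slotF u v s₂).totalDegree := by
    -- it suffices to treat the cases (none, some) and (some, some); by symmetry handle all
    rintro (_ | r) (_ | r') hne
    · exact absurd rfl hne
    · -- v and u - r' v
      have hvle : v.totalDegree ≤ (slotF u v none).totalDegree := le_of_eq rfl
      have hCrv : (C r' * v).totalDegree ≤ v.totalDegree := by
        simpa using totalDegree_mul (C r') v
      have huev : u = (u - C r' * v) + C r' * v := by ring
      have hule : u.totalDegree ≤ max (u - C r' * v).totalDegree (C r' * v).totalDegree := by
        conv_lhs => rw [huev]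
        exact totalDegree_add _ _
      simp only [slotF]
      omega
    · -- u - r v and v
      have hCrv : (C r * v).totalDegree ≤ v.totalDegree := by
        simpa using totalDegree_mul (C r) v
      have huev : u = (u - C r * v) + C r * v := by ring
      have hule : u.totalDegree ≤ max (u - C r * v).totalDegree (C r * v).totalDegree := by
        conv_lhs => rw [huev]
        exact totalDegree_add _ _
      simp only [slotF]
      omega
    · -- u - r v and u - r' v with r ≠ r'
      have hrr' : r ≠ r' := fun hr => hne (by rw [hr])
      have hvdiff : v = C (r' - r)⁻¹ * ((u - C r * v) - (u - C r' * v)) := by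
        have : (u - C r * v) - (u - C r' * v) = C (r' - r) * v := by
          rw [map_sub]; ring
        rw [this, ← mul_assoc, ← map_mul, inv_mul_cancel₀ (sub_ne_zero.mpr (Ne.symm hrr')), map_one,
          one_mul]
      have hsub : ((u - C r * v) - (u - C r' * v)).totalDegree
          ≤ max (u - C r * v).totalDegree (u - C r' * v).totalDegree :=
        totalDegree_sub _ _
      have hvle : v.totalDegree
          ≤ max (u - C r * v).totalDegree (u - C r' * v).totalDegree := by
        calc v.totalDegree
            = (C (r' - r)⁻¹ * ((u - C r * v) - (u - C r' * v))).totalDegree := by rw [← hvdiff]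
          _ ≤ (C (r' - r)⁻¹ : MvPolynomial σ K).totalDegree
                + ((u - C r * v) - (u - C r' * v)).totalDegree :=
              totalDegree_mul _ _
          _ = ((u - C r * v) - (u - C r' * v)).totalDegree := by
              rw [totalDegree_C, zero_add]
          _ ≤ _ := hsub
      have hCrv : (C r * v).totalDegree ≤ v.totalDegree := by
        simpa using totalDegree_mul (C r) v
      have huev : u = (u - C r * v) + C r * v := by ring
      have hule : u.totalDegree ≤ max (u - C r * v).totalDegree (C r * v).totalDegree := by
        conv_lhs => rw [huev]
        exact totalDegree_add _ _
      simp only [slotF]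
      omega
  exact key s s' h

lemma slotF_relprime (huv : IsRelPrime u v) {s s' : Option K} (h : s ≠ s') :
    IsRelPrime (slotF u v s) (slotF u v s') := by
  have key : ∀ (r : K), IsRelPrime (slotF u v none) (slotF u v (some r)) := by
    intro r z h1 h2
    have hzu : z ∣ u := by
      have := dvd_add h2 (h1.mul_left (C r))
      simpa [slotF, sub_add_cancel] using this
    exact huv hzu h1
  cases s with
  | none =>
    cases s' with
    | none => exact absurd rfl h
    | some r => exact key r
  | some r =>
    cases s' with
    | none => exact (key r).symm
    | some r' =>
      have hrr' : r ≠ r' := fun hr => h (by rw [hr])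
      intro z h1 h2
      have hdiff : z ∣ C (r' - r) * v := by
        have : (u - C r * v) - (u - C r' * v) = C (r' - r) * v := by
          rw [map_sub]; ring
        exact this ▸ dvd_sub h1 h2
      have hCunit : IsUnit (C (r' - r) : MvPolynomial σ K) :=
        IsUnit.map (C : K →+* MvPolynomial σ K)
          (isUnit_iff_ne_zero.mpr (sub_ne_zero.mpr (Ne.symm hrr')))
      have hzv : z ∣ v := (hCunit.dvd_mul_left).mp hdiff
      have hzu : z ∣ u := by
        have := dvd_add h1 (hzv.mul_left (C r))
        simpa [slotF, sub_add_cancel] using this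
      exact huv hzu hzv

end FieldLemmas

section SlotT

variable {n : ℕ}

/-- Multiset of slots of the degree-`m` homogenization of `w`. -/
def slotT (m : ℕ) (w : Polynomial K) : Multiset (Option K) :=
  Multiset.replicate (m - w.natDegree) none + w.roots.map some

/-- Degree-`m` homogenization of `w` with respect to the fraction `u / v`. -/
def hom2 (u v : MvPolynomial (Fin n) K) (m : ℕ) (w : Polynomial K) : MvPolynomial (Fin n) K :=
  C w.leadingCoeff * ((slotT m w).map (slotF u v)).prod

lemma mem_slotT_none {m : ℕ} {w : Polynomial K} (h : (none : Option K) ∈ slotT m w) :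
    w.natDegree < m := by
  rcases Multiset.mem_add.mp h with h1 | h2
  · have := (Multiset.mem_replicate.mp h1).1
    omega
  · obtain ⟨r, _, hr⟩ := Multiset.mem_map.mp h2
    exact absurd hr (by simp)

lemma mem_slotT_some {m : ℕ} {w : Polynomial K} {r : K} (h : some r ∈ slotT m w) :
    r ∈ w.roots := by
  rcases Multiset.mem_add.mp h with h1 | h2
  · exact absurd (Multiset.mem_replicate.mp h1).2 (by simp)
  · obtain ⟨r', hr', heq⟩ := Multiset.mem_map.mp h2
    rwa [← Option.some_injective K heq]

lemma count_none_slotT [DecidableEq K] (m : ℕ) (w : Polynomial K) :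
    (slotT m w).count none = m - w.natDegree := by
  unfold slotT
  rw [Multiset.count_add, Multiset.count_replicate, if_pos rfl]
  have : (none : Option K) ∉ w.roots.map some := by
    intro h
    obtain ⟨r, _, hr⟩ := Multiset.mem_map.mp h
    exact absurd hr (by simp)
  rw [Multiset.count_eq_zero.mpr this, add_zero]

lemma count_some_slotT [DecidableEq K] (m : ℕ) (w : Polynomial K) (r : K) :
    (slotT m w).count (some r) = w.roots.count r := by
  unfold slotT
  rw [Multiset.count_add, Multiset.count_replicate, if_neg (by simp),
    Multiset.count_map_eq_count' some _ (Option.some_injective K), zero_add]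

variable [IsAlgClosed K]

lemma card_slotT {m : ℕ} {w : Polynomial K} (hw : w ≠ 0) (hwm : w.natDegree ≤ m) :
    Multiset.card (slotT m w) = m := by
  have hroots : w.roots.card = w.natDegree :=
    (Polynomial.splits_iff_card_roots).mp (IsAlgClosed.splits w)
  unfold slotT
  rw [Multiset.card_add, Multiset.card_replicate, Multiset.card_map, hroots]
  omega

lemma map_hom2 (u v : MvPolynomial (Fin n) K) {m : ℕ} {w : Polynomial K} (hv : v ≠ 0)
    (hwm : w.natDegree ≤ m) :
    algebraMap (MvPolynomial (Fin n) K) (Lf n K) (hom2 u v m w)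
      = (algebraMap (MvPolynomial (Fin n) K) (Lf n K) v) ^ m
        * Polynomial.eval₂ (ratι n K)
            (algebraMap (MvPolynomial (Fin n) K) (Lf n K) u
              / algebraMap (MvPolynomial (Fin n) K) (Lf n K) v) w := by
  set Φ := algebraMap (MvPolynomial (Fin n) K) (Lf n K)
  set g := Φ u / Φ v with hg
  have hΦv : Φ v ≠ 0 := by
    intro h
    exact hv ((map_eq_zero_iff Φ (IsFractionRing.injective _ _)).mp h)
  rcases eq_or_ne w 0 with rfl | hw
  · simp [hom2, slotT]
  have hs := IsAlgClosed.splits (k := K) w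
  have hroots : w.roots.card = w.natDegree := (Polynomial.splits_iff_card_roots).mp hs
  have heq := Polynomial.Splits.eq_prod_roots hs
  -- right hand side
  set E : Polynomial K →+* Lf n K := Polynomial.eval₂RingHom (ratι n K) g with hE
  have hEeval : Polynomial.eval₂ (ratι n K) g w = E w := rfl
  have hra : ∀ k : K, ratι n K k = Φ (MvPolynomial.C k) := fun k => rfl
  have hRHS : E w = ratι n K w.leadingCoeff * (w.roots.map (fun r => g - ratι n K r)).prod := by
    conv_lhs => rw [heq]
    rw [map_mul, map_multiset_prod, Multiset.map_map]
    congr 1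
    · simp [hE]
    · congr 1
      apply Multiset.map_congr rfl
      intro r _
      simp [hE]
  have hfac : (w.roots.map (fun r => Φ u - Φ (MvPolynomial.C r) * Φ v))
      = w.roots.map (fun r => Φ v * (g - ratι n K r)) := by
    apply Multiset.map_congr rfl
    intro r _
    rw [hra, hg]
    field_simp
  have hL : Φ (hom2 u v m w)
      = ratι n K w.leadingCoeff * ((Φ v) ^ (m - w.natDegree)
        * (Φ v ^ Multiset.card w.roots * (w.roots.map (fun r => g - ratι n K r)).prod)) := by
    rw [hom2, map_mul, ← hra]
    congr 1
    rw [map_multiset_prod, Multiset.map_map, slotT, Multiset.map_add, Multiset.prod_add]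
    congr 1
    · rw [Multiset.map_replicate, Multiset.prod_replicate]
      rfl
    · rw [Multiset.map_map]
      have h2 : Multiset.map ((⇑Φ ∘ slotF u v) ∘ some) w.roots
          = w.roots.map (fun r => Φ v * (g - ratι n K r)) := by
        refine Multiset.map_congr rfl ?_
        intro r hr
        show Φ (slotF u v (some r)) = Φ v * (g - ratι n K r)
        rw [hra, hg]
        simp only [slotF, map_sub, map_mul]
        field_simp
      rw [h2, Multiset.prod_map_mul, Multiset.map_const', Multiset.prod_replicate]
  rw [hL, hEeval, hRHS, hroots,
    show Φ v ^ m = Φ v ^ (m - w.natDegree) * Φ v ^ w.natDegree by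
      rw [← pow_add, Nat.sub_add_cancel hwm]]
  ring

lemma no_common_root {c e : Polynomial K} (hce : IsCoprime c e) {r : K}
    (hr : r ∈ c.roots) (hr' : r ∈ e.roots) : False := by
  obtain ⟨s, t, hst⟩ := hce
  have h1 : c.eval r = 0 := ((Polynomial.mem_roots'.mp hr)).2
  have h2 : e.eval r = 0 := ((Polynomial.mem_roots'.mp hr')).2
  have := congrArg (Polynomial.eval r) hst
  simp [h1, h2] at this

lemma relprime_hom2 (u v : MvPolynomial (Fin n) K) {m : ℕ} {c e : Polynomial K}
    (huv : IsRelPrime u v) (hc : c ≠ 0) (he : e ≠ 0) (hce : IsCoprime c e)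
    (hmax : max c.natDegree e.natDegree = m) :
    IsRelPrime (hom2 u v m c) (hom2 u v m e) := by
  have hslots : ∀ s ∈ slotT m c, ∀ s' ∈ slotT m e, s ≠ s' := by
    rintro (_ | r) hs (_ | r') hs' <;> intro heq
    · have h1 := mem_slotT_none hs
      have h2 := mem_slotT_none hs'
      omega
    · exact absurd heq (by simp)
    · exact absurd heq (by simp)
    · rw [Option.some_injective K heq] at hs
      exact no_common_root hce (mem_slotT_some hs) (mem_slotT_some hs')
  have hUc : IsUnit (MvPolynomial.C c.leadingCoeff : MvPolynomial (Fin n) K) :=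
    IsUnit.map _ (isUnit_iff_ne_zero.mpr (Polynomial.leadingCoeff_ne_zero.mpr hc))
  have hUe : IsUnit (MvPolynomial.C e.leadingCoeff : MvPolynomial (Fin n) K) :=
    IsUnit.map _ (isUnit_iff_ne_zero.mpr (Polynomial.leadingCoeff_ne_zero.mpr he))
  have base : IsRelPrime ((slotT m c).map (slotF u v)).prod ((slotT m e).map (slotF u v)).prod := by
    apply my_relprime_prod_left
    intro x hx
    obtain ⟨s, hs, rfl⟩ := Multiset.mem_map.mp hx
    refine (my_relprime_prod_left ?_).symm
    intro y hy
    obtain ⟨s', hs', rfl⟩ := Multiset.mem_map.mp hy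
    exact (slotF_relprime u v huv (hslots s hs s' hs')).symm
  rw [hom2, hom2]
  refine (my_relprime_unit_left hUc).mul_left ?_
  refine IsRelPrime.mul_right ((my_relprime_unit_left hUe).symm) base

end SlotT

section Crunch

variable [IsAlgClosed K] {n : ℕ}

lemma crunch (u v : MvPolynomial (Fin n) K) (hv : v ≠ 0) (huv : IsRelPrime u v)
    (a b c : Polynomial K) (ha : a ≠ 0) (hb : b ≠ 0) (hc : c ≠ 0) (hab : IsCoprime a b)
    (hm2 : 2 ≤ max a.natDegree b.natDegree)
    (hcm : c.natDegree ≤ max a.natDegree b.natDegree)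
    (P : MvPolynomial (Fin n) K)
    (hPassoc : Associated P (hom2 u v (max a.natDegree b.natDegree) c))
    (hdegP : P.totalDegree = max (hom2 u v (max a.natDegree b.natDegree) a).totalDegree
        (hom2 u v (max a.natDegree b.natDegree) b).totalDegree)
    (hirr : Irreducible P) : False := by
  classical
  set m := max a.natDegree b.natDegree with hm
  set Δ := max u.totalDegree v.totalDegree with hΔdef
  set F := slotF u v with hF
  set T := slotT m c with hTdef
  have hUc : IsUnit (MvPolynomial.C c.leadingCoeff : MvPolynomial (Fin n) K) :=
    IsUnit.map _ (isUnit_iff_ne_zero.mpr (Polynomial.leadingCoeff_ne_zero.mpr hc))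
  have hClc : (MvPolynomial.C c.leadingCoeff : MvPolynomial (Fin n) K) ≠ 0 := hUc.ne_zero
  have hTcard : Multiset.card T = m := card_slotT hc hcm
  have homc : hom2 u v m c = MvPolynomial.C c.leadingCoeff * (T.map F).prod := rfl
  -- degenerate case: both u and v are constants
  by_cases hΔ0 : Δ = 0
  · have hFdeg : ∀ s : Option K, (F s).totalDegree = 0 := by
      intro s
      have hle : (F s).totalDegree ≤ Δ := slotF_deg_le u v s
      omega
    have hsum : ((T.map F).map totalDegree).sum = 0 := by
      apply Multiset.sum_eq_zero
      intro d hd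
      obtain ⟨x, hx, rfl⟩ := Multiset.mem_map.mp hd
      obtain ⟨s, hs, rfl⟩ := Multiset.mem_map.mp hx
      exact hFdeg s
    have h1 : (hom2 u v m c).totalDegree = 0 := by
      have hle1 := totalDegree_mul (MvPolynomial.C c.leadingCoeff) ((T.map F).prod)
      have hle2 := totalDegree_multiset_prod (T.map F)
      rw [hsum] at hle2
      have : (hom2 u v m c).totalDegree ≤ 0 := by
        rw [homc]
        refine le_trans hle1 ?_
        rw [totalDegree_C]
        omega
      omega
    have hP0 : P.totalDegree = 0 := by rw [my_assoc_totalDegree hPassoc, h1]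
    exact my_not_irred hP0 hirr
  have hΔ1 : 1 ≤ Δ := Nat.one_le_iff_ne_zero.2 hΔ0
  set Tn := T.filter (fun s => ¬ IsUnit (F s)) with hTndef
  rcases Nat.lt_or_ge (Multiset.card Tn) 2 with hlt | hge
  · rcases (by omega : Multiset.card Tn = 0 ∨ Multiset.card Tn = 1) with h0 | h1
    · -- all slots give units: P is a unit
      have hall : ∀ x ∈ T.map F, IsUnit x := by
        intro x hx
        obtain ⟨s, hs, rfl⟩ := Multiset.mem_map.mp hx
        by_contra hnu
        have : s ∈ Tn := Multiset.mem_filter.mpr ⟨hs, hnu⟩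
        rw [Multiset.card_eq_zero.mp h0] at this
        exact Multiset.notMem_zero s this
      have : IsUnit (hom2 u v m c) := by
        rw [homc]
        exact hUc.mul (my_units_prod hall)
      exact hirr.not_isUnit (hPassoc.symm.isUnit this)
    · -- exactly one non-unit slot
      obtain ⟨s₁, hs1⟩ := Multiset.card_eq_one.mp h1
      have hs1mem : s₁ ∈ Tn := by rw [hs1]; exact Multiset.mem_singleton_self s₁
      have hs1T : s₁ ∈ T := (Multiset.mem_filter.mp hs1mem).1
      have hs1nu : ¬ IsUnit (F s₁) := (Multiset.mem_filter.mp hs1mem).2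
      set T₂ := T.erase s₁ with hT2def
      have hT12 : T = s₁ ::ₘ T₂ := (Multiset.cons_erase hs1T).symm
      have hcount1 : T.count s₁ = 1 := by
        have := Multiset.count_filter_of_pos (s := T) (p := fun s => ¬ IsUnit (F s)) hs1nu
        rw [← hTndef, hs1, Multiset.count_singleton, if_pos rfl] at this
        omega
      have hT2unit : ∀ s ∈ T₂, IsUnit (F s) := by
        intro s hs
        by_contra hnu
        have hsT : s ∈ T := Multiset.mem_of_mem_erase hs
        have hsTn : s ∈ Tn := Multiset.mem_filter.mpr ⟨hsT, hnu⟩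
        have hseq : s = s₁ := by
          rw [hs1] at hsTn
          exact Multiset.mem_singleton.mp hsTn
        subst hseq
        have : 1 ≤ T₂.count s := Multiset.one_le_count_iff_mem.mpr hs
        have hTc : T.count s = T₂.count s + 1 := by
          rw [hT12, Multiset.count_cons_self]
        omega
      have hT2card : Multiset.card T₂ + 1 = m := by
        rw [hT12] at hTcard
        simpa using hTcard
      obtain ⟨s₀, hs0⟩ := Multiset.card_pos_iff_exists_mem.mp
        (show 0 < Multiset.card T₂ by omega)
      have hu0 : IsUnit (F s₀) := hT2unit s₀ hs0
      have hs01 : s₁ ≠ s₀ := fun h => hs1nu (h ▸ hu0)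
      have hdegs0 : (F s₀).totalDegree = 0 := my_unit_totalDegree hu0
      -- the non-unit slot has degree exactly Δ, and P has degree ≤ Δ
      have hs1le : (F s₁).totalDegree ≤ Δ := slotF_deg_le u v s₁

      -- upper bound for the degree of P
      have hPle : P.totalDegree ≤ Δ := by
        rw [my_assoc_totalDegree hPassoc, homc]
        refine le_trans (totalDegree_mul _ _) ?_
        rw [totalDegree_C]
        refine le_trans (by omega : 0 + ((T.map F).prod).totalDegree
          ≤ ((T.map F).prod).totalDegree) ?_
        refine le_trans (totalDegree_multiset_prod (T.map F)) ?_
        rw [hT12, Multiset.map_cons, Multiset.map_cons, Multiset.sum_cons]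
        have hsum2 : ((T₂.map F).map totalDegree).sum = 0 := by
          apply Multiset.sum_eq_zero
          intro d hd
          obtain ⟨x, hx, rfl⟩ := Multiset.mem_map.mp hd
          obtain ⟨s, hs, rfl⟩ := Multiset.mem_map.mp hx
          exact my_unit_totalDegree (hT2unit s hs)
        rw [Multiset.map_map] at hsum2 ⊢
        rw [hsum2, add_zero]
        exact hs1le
      -- choose w ∈ {a, b} avoiding the unit slot s₀
      have hwchoice : ∃ w : Polynomial K, w ≠ 0 ∧ w.natDegree ≤ m ∧
          (hom2 u v m w).totalDegree ≤ P.totalDegree ∧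
          Multiset.count s₀ (slotT m w) = 0 := by
        rcases s₀ with _ | r
        · rcases max_choice a.natDegree b.natDegree with hmx | hmx
          · refine ⟨a, ha, le_max_left _ _, by rw [hdegP]; exact le_max_left _ _, ?_⟩
            rw [count_none_slotT]
            omega
          · refine ⟨b, hb, le_max_right _ _, by rw [hdegP]; exact le_max_right _ _, ?_⟩
            rw [count_none_slotT]
            omega
        · by_cases hra : r ∈ a.roots
          · refine ⟨b, hb, le_max_right _ _, by rw [hdegP]; exact le_max_right _ _, ?_⟩
            rw [count_some_slotT]
            rw [Multiset.count_eq_zero]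
            intro hrb
            exact no_common_root hab hra hrb
          · refine ⟨a, ha, le_max_left _ _, by rw [hdegP]; exact le_max_left _ _, ?_⟩
            rw [count_some_slotT]
            rw [Multiset.count_eq_zero]
            exact hra
      obtain ⟨w, hw0, hwm, hwle, hcnt0⟩ := hwchoice
      have hallne : ∀ s ∈ slotT m w, s ≠ s₀ := by
        intro s hs heq
        subst heq
        exact (Multiset.count_eq_zero.mp hcnt0) hs
      have hdegge : ∀ s ∈ slotT (K := K) m w, Δ ≤ (F s).totalDegree := by
        intro s hs
        have hpair : Δ ≤ max (F s).totalDegree (F s₀).totalDegree :=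
          slotF_pair_deg u v (hallne s hs)
        rw [hdegs0] at hpair
        omega
      have hne0 : ∀ x ∈ (slotT (K := K) m w).map F, x ≠ 0 := by
        intro x hx hx0
        obtain ⟨s, hs, rfl⟩ := Multiset.mem_map.mp hx
        have := hdegge s hs
        rw [hx0, totalDegree_zero] at this
        omega
      have hwcard : Multiset.card (slotT (K := K) m w) = m := card_slotT hw0 hwm
      have hUw : IsUnit (MvPolynomial.C w.leadingCoeff : MvPolynomial (Fin n) K) :=
        IsUnit.map _ (isUnit_iff_ne_zero.mpr (Polynomial.leadingCoeff_ne_zero.mpr hw0))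
      have hprodne : ((slotT (K := K) m w).map F).prod ≠ 0 :=
        Multiset.prod_ne_zero (fun h0 => hne0 0 h0 rfl)
      have hdegw : (hom2 u v m w).totalDegree
          = (((slotT (K := K) m w).map F).map totalDegree).sum := by
        rw [hom2, my_totalDegree_mul hUw.ne_zero hprodne, totalDegree_C, zero_add,
          my_totalDegree_prod _ hne0]
      have hsumge : m * Δ ≤ (((slotT (K := K) m w).map F).map totalDegree).sum := by
        have hcardmap : Multiset.card (((slotT (K := K) m w).map F).map totalDegree) = m := by
          rw [Multiset.card_map, Multiset.card_map, hwcard]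
        have := Multiset.card_nsmul_le_sum
          (s := ((slotT (K := K) m w).map F).map totalDegree) (a := Δ) ?_
        · rw [hcardmap, smul_eq_mul] at this
          exact this
        · intro x hx
          obtain ⟨y, hy, rfl⟩ := Multiset.mem_map.mp hx
          obtain ⟨s, hs, rfl⟩ := Multiset.mem_map.mp hy
          exact hdegge s hs
      have h2d : 2 * Δ ≤ m * Δ := Nat.mul_le_mul_right Δ hm2
      have hfinal : m * Δ ≤ P.totalDegree := by
        rw [← hdegw] at hsumge
        omega
      omega
  · -- at least two non-unit slots: contradicts irreducibility
    obtain ⟨x, hx⟩ := Multiset.card_pos_iff_exists_mem.mp (show 0 < Multiset.card Tn by omega)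
    obtain ⟨Tn', hTn'⟩ := Multiset.exists_cons_of_mem hx
    have hcard' : 0 < Multiset.card Tn' := by
      rw [hTn'] at hge
      simp only [Multiset.card_cons] at hge
      omega
    obtain ⟨y, hy⟩ := Multiset.card_pos_iff_exists_mem.mp hcard'
    obtain ⟨Tn'', hTn''⟩ := Multiset.exists_cons_of_mem hy
    have hxTn : x ∈ Tn := hx
    have hyTn : y ∈ Tn := by
      rw [hTn', hTn'']
      exact Multiset.mem_cons_of_mem (Multiset.mem_cons_self y Tn'')
    have hxnu : ¬ IsUnit (F x) := (Multiset.mem_filter.mp hxTn).2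
    have hynu : ¬ IsUnit (F y) := (Multiset.mem_filter.mp hyTn).2
    have hle : x ::ₘ y ::ₘ Tn'' ≤ T := by
      have : Tn ≤ T := Multiset.filter_le _ T
      rw [hTn', hTn''] at this
      exact this
    obtain ⟨T', hT'⟩ := Multiset.le_iff_exists_add.mp hle
    have hprodT : (T.map F).prod = F x * (F y * ((Tn'' + T').map F).prod) := by
      rw [hT']
      rw [show (x ::ₘ y ::ₘ Tn'') + T' = x ::ₘ (y ::ₘ (Tn'' + T')) by
        rw [Multiset.cons_add, Multiset.cons_add]]
      rw [Multiset.map_cons, Multiset.map_cons, Multiset.prod_cons, Multiset.prod_cons]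
    have hirr2 : Irreducible (hom2 u v m c) := hPassoc.irreducible hirr
    have hsplit : hom2 u v m c
        = F x * (MvPolynomial.C c.leadingCoeff * (F y * ((Tn'' + T').map F).prod)) := by
      rw [homc, hprodT]; ring
    rcases hirr2.isUnit_or_isUnit hsplit with h | h
    · exact hxnu h
    · have : F y ∣ MvPolynomial.C c.leadingCoeff * (F y * ((Tn'' + T').map F).prod) :=
        ⟨MvPolynomial.C c.leadingCoeff * ((Tn'' + T').map F).prod, by ring⟩
      exact hynu (isUnit_of_dvd_unit this h)

end Crunch


theorem stmt0 {K : Type*} [Field K] [IsAlgClosed K] (n : ℕ) (hn : 2 ≤ n)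
    (p q : MvPolynomial (Fin n) K) (hpq : IsRelPrime p q) (hq : q ≠ 0)
    (hcomp : IsComposite (algebraMap (MvPolynomial (Fin n) K) (Lf n K) p /
      algebraMap (MvPolynomial (Fin n) K) (Lf n K) q)) :
    ∀ l : Option K, (pencil p q l).totalDegree = max p.totalDegree q.totalDegree →
      ¬ Irreducible (pencil p q l) := by
  classical
  intro l hdeg hirr
  obtain ⟨a, b, g, hab, hm2, hEb0, hfeq⟩ := hcomp
  set Φ := algebraMap (MvPolynomial (Fin n) K) (Lf n K) with hΦ
  have hinj : Function.Injective Φ := IsFractionRing.injective _ _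
  -- a and b are nonzero
  have ha0 : a ≠ 0 := by
    rintro rfl
    rw [isCoprime_zero_left] at hab
    have := Polynomial.natDegree_eq_zero_of_isUnit hab
    simp [this] at hm2
  have hb0 : b ≠ 0 := by
    rintro rfl
    rw [isCoprime_zero_right] at hab
    have := Polynomial.natDegree_eq_zero_of_isUnit hab
    simp [this] at hm2
  -- reduced fraction for g
  obtain ⟨u, vd, hred, hmk⟩ := IsFractionRing.exists_reduced_fraction
    (A := MvPolynomial (Fin n) K) g
  set v := (vd : MvPolynomial (Fin n) K) with hvdef
  have hv : v ≠ 0 := mem_nonZeroDivisors_iff_ne_zero.mp vd.2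
  have hg : g = Φ u / Φ v := by
    rw [← hmk, IsFractionRing.mk'_eq_div]
  set m := max a.natDegree b.natDegree with hm
  have hΦv : Φ v ≠ 0 := fun h => hv ((map_eq_zero_iff Φ hinj).mp h)
  have hΦq : Φ q ≠ 0 := fun h => hq ((map_eq_zero_iff Φ hinj).mp h)
  rw [hg] at hEb0 hfeq
  set Ea := Polynomial.eval₂ (ratι n K) (Φ u / Φ v) a with hEa
  set Eb := Polynomial.eval₂ (ratι n K) (Φ u / Φ v) b with hEb
  have hcross : Φ p * Eb = Ea * Φ q := by
    rw [div_eq_div_iff hΦq hEb0] at hfeq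
    exact hfeq
  have hA : Φ (hom2 u v m a) = Φ v ^ m * Ea := map_hom2 u v hv (le_max_left _ _)
  have hB : Φ (hom2 u v m b) = Φ v ^ m * Eb := map_hom2 u v hv (le_max_right _ _)
  -- the fundamental identity p * hom2 b = q * hom2 a
  have hid : p * hom2 u v m b = q * hom2 u v m a := by
    apply hinj
    rw [map_mul, map_mul, hA, hB]
    linear_combination (Φ v ^ m) * hcross
  have relAB : IsRelPrime (hom2 u v m a) (hom2 u v m b) :=
    relprime_hom2 u v hred ha0 hb0 hab rfl
  have hpassoc : Associated p (hom2 u v m a) := by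
    have h1 : p ∣ hom2 u v m a := by
      refine hpq.dvd_of_dvd_mul_left ?_
      exact ⟨hom2 u v m b, hid.symm⟩
    have h2 : hom2 u v m a ∣ p := by
      refine relAB.dvd_of_dvd_mul_right ?_
      exact ⟨q, by linear_combination hid⟩
    exact associated_of_dvd_dvd h1 h2
  have hqassoc : Associated q (hom2 u v m b) := by
    have h1 : q ∣ hom2 u v m b := by
      refine hpq.symm.dvd_of_dvd_mul_left ?_
      exact ⟨hom2 u v m a, hid⟩
    have h2 : hom2 u v m b ∣ q := by
      refine relAB.symm.dvd_of_dvd_mul_right ?_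
      exact ⟨p, by linear_combination -hid⟩
    exact associated_of_dvd_dvd h1 h2
  have hdeg' : (pencil p q l).totalDegree
      = max (hom2 u v m a).totalDegree (hom2 u v m b).totalDegree := by
    rw [hdeg, my_assoc_totalDegree hpassoc, my_assoc_totalDegree hqassoc]
  cases l with
  | none =>
    exact crunch u v hv hred a b b ha0 hb0 hb0 hab hm2 (le_max_right _ _) q hqassoc hdeg' hirr
  | some lam =>
    set c := a - Polynomial.C lam * b with hcdef
    have hc0 : c ≠ 0 := by
      intro h
      have hba : a = Polynomial.C lam * b := sub_eq_zero.mp h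
      have hdvd : b ∣ a := ⟨Polynomial.C lam, by rw [hba]; ring⟩
      have hub : IsUnit b := hab.isUnit_of_dvd' hdvd dvd_rfl
      have hdb := Polynomial.natDegree_eq_zero_of_isUnit hub
      have hda : a.natDegree ≤ b.natDegree := by
        rw [hba]
        exact le_trans (Polynomial.natDegree_C_mul_le lam b) le_rfl
      have : m = max a.natDegree b.natDegree := hm
      omega
    have hcm : c.natDegree ≤ m := by
      have h1 := Polynomial.natDegree_sub_le a (Polynomial.C lam * b)
      have h2 := Polynomial.natDegree_C_mul_le lam b
      have : m = max a.natDegree b.natDegree := hm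
      rw [hcdef]
      omega
    have hmaxcb : max c.natDegree b.natDegree = m := by
      have hmm : m = max a.natDegree b.natDegree := hm
      by_cases hdb : b.natDegree = m
      · omega
      · have hda : a.natDegree = m := by omega
        have hlt : (Polynomial.C lam * b).natDegree < a.natDegree :=
          lt_of_le_of_lt (Polynomial.natDegree_C_mul_le lam b) (by omega)
        have hcd : c.natDegree = a.natDegree := by
          rw [hcdef]
          exact Polynomial.natDegree_sub_eq_left_of_natDegree_lt hlt
        omega
    have hcb : IsCoprime c b := by
      have h2 := hab.add_mul_left_left (-Polynomial.C lam)
      have h3 : a + b * -Polynomial.C lam = c := by rw [hcdef]; ring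
      rwa [h3] at h2
    have hC : Φ (hom2 u v m c) = Φ v ^ m * Polynomial.eval₂ (ratι n K) (Φ u / Φ v) c :=
      map_hom2 u v hv hcm
    have hEc : Polynomial.eval₂ (ratι n K) (Φ u / Φ v) c
        = Ea - Φ (MvPolynomial.C lam) * Eb := by
      rw [hcdef, Polynomial.eval₂_sub, Polynomial.eval₂_mul, Polynomial.eval₂_C]
      rfl
    have hidc : (p - MvPolynomial.C lam * q) * hom2 u v m b = q * hom2 u v m c := by
      apply hinj
      rw [map_mul, map_mul, map_sub, map_mul, hB, hC, hEc]
      linear_combination (Φ v ^ m) * hcross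
    have relCB : IsRelPrime (hom2 u v m c) (hom2 u v m b) :=
      relprime_hom2 u v hred hc0 hb0 hcb hmaxcb
    have relPq : IsRelPrime (p - MvPolynomial.C lam * q) q := by
      intro z h1 h2
      refine hpq ?_ h2
      have := dvd_add h1 (h2.mul_left (MvPolynomial.C lam))
      rwa [sub_add_cancel] at this
    have hPassoc : Associated (p - MvPolynomial.C lam * q) (hom2 u v m c) := by
      have h1 : (p - MvPolynomial.C lam * q) ∣ hom2 u v m c :=
        relPq.dvd_of_dvd_mul_left ⟨hom2 u v m b, hidc.symm⟩
      have h2 : hom2 u v m c ∣ (p - MvPolynomial.C lam * q) :=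
        relCB.dvd_of_dvd_mul_right ⟨q, by linear_combination hidc⟩
      exact associated_of_dvd_dvd h1 h2
    exact crunch u v hv hred a b c ha0 hb0 hc0 hab hm2 hcm (pencil p q (some lam))
      hPassoc hdeg' hirr

end
end

section
/- Let K be an algebraically closed field of characteristic 0 and f = p/q ∈ K(x,y) with gcd(p,q) = 1. If g ∈ K(x,y) is algebraically dependent with f over K, then for all but finitely many λ ∈ K ∪ {∞}, g is constant on every irreducible component of the curve (p − λq = 0). -/
open MvPolynomial

noncomputable section
variable {K : Type*} [Field K]

def constOn {K : Type*} [Field K] (u v F : MvPolynomial (Fin 2) K) : Prop :=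
  ∃ c : K, F ∣ (u - MvPolynomial.C c * v) ∧ ¬ F ∣ v

lemma aux_div_pow {L : Type*} [Field L] (x y : L) (hy : y ≠ 0) {a d : ℕ} (h : a ≤ d) :
    (x / y) ^ a * y ^ d = x ^ a * y ^ (d - a) := by
  have hd : d = a + (d - a) := (Nat.add_sub_cancel' h).symm
  rw [hd, pow_add, div_pow]
  field_simp
  simp

set_option maxHeartbeats 2000000 in
set_option synthInstance.maxHeartbeats 1000000 in
lemma key_dvd {K : Type*} [Field K] [IsAlgClosed K]
    (p q u v F : MvPolynomial (Fin 2) K) (l : K)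
    (hF : Irreducible F) (hFd : F ∣ p - C l * q) (hFq : ¬ F ∣ q) (hFv : ¬ F ∣ v)
    (T : Finset ((Fin 2) →₀ ℕ)) (c : ((Fin 2) →₀ ℕ) → K) (d e : ℕ)
    (hd : ∀ m ∈ T, m 0 ≤ d) (he : ∀ m ∈ T, m 1 ≤ e)
    (hH : ∑ m ∈ T, C (c m) * p ^ (m 0) * q ^ (d - m 0) * u ^ (m 1) * v ^ (e - m 1) = 0)
    (hQ : (∑ m ∈ T, Polynomial.C (c m * l ^ (m 0)) * Polynomial.X ^ (m 1)) ≠ 0) :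
    constOn u v F := by
  classical
  have hprime : Prime F := UniqueFactorizationMonoid.irreducible_iff_prime.mp hF
  set I : Ideal (MvPolynomial (Fin 2) K) := Ideal.span {F} with hI
  haveI : I.IsPrime := (Ideal.span_singleton_prime hprime.ne_zero).mpr hprime
  set mk : MvPolynomial (Fin 2) K →+* MvPolynomial (Fin 2) K ⧸ I := Ideal.Quotient.mk I with hmk
  have hmem : ∀ x, mk x = 0 ↔ F ∣ x := fun x =>
    (Ideal.Quotient.eq_zero_iff_mem).trans Ideal.mem_span_singleton
  have hmkp : mk p = mk (C l) * mk q := by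
    rw [← map_mul, Ideal.Quotient.mk_eq_mk_iff_sub_mem]
    exact Ideal.mem_span_singleton.mpr hFd
  have hmkq : mk q ≠ 0 := fun h => hFq ((hmem q).mp h)
  have hmkv : mk v ≠ 0 := fun h => hFv ((hmem v).mp h)
  set S : MvPolynomial (Fin 2) K ⧸ I :=
    ∑ m ∈ T, mk (C (c m * l ^ (m 0))) * mk u ^ (m 1) * mk v ^ (e - m 1) with hS
  have hqS : mk q ^ d * S = 0 := by
    have h0 := congrArg mk hH
    rw [map_sum, map_zero] at h0
    rw [← h0, hS, Finset.mul_sum]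
    refine Finset.sum_congr rfl fun m hm => ?_
    simp only [map_mul, map_pow, hmkp, mul_pow, C_mul, C_pow]
    rw [show mk q ^ d = mk q ^ (m 0) * mk q ^ (d - m 0) from by
      rw [← pow_add, Nat.add_sub_cancel' (hd m hm)]]
    ring
  have hSz : S = 0 := (mul_eq_zero.mp hqS).resolve_left (pow_ne_zero _ hmkq)
  set j : _ →+* FractionRing (MvPolynomial (Fin 2) K ⧸ I) :=
    algebraMap (MvPolynomial (Fin 2) K ⧸ I) (FractionRing (MvPolynomial (Fin 2) K ⧸ I)) with hjdef
  have hj : Function.Injective j := IsFractionRing.injective _ _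
  have hjv : j (mk v) ≠ 0 := fun h => hmkv (hj (by rw [h, map_zero]))
  set φ : K →+* FractionRing (MvPolynomial (Fin 2) K ⧸ I) :=
    j.comp (mk.comp (MvPolynomial.C : K →+* MvPolynomial (Fin 2) K)) with hφ
  set w := j (mk u) / j (mk v) with hw
  set Q : Polynomial K := ∑ m ∈ T, Polynomial.C (c m * l ^ (m 0)) * Polynomial.X ^ (m 1) with hQdef
  have heval : Polynomial.eval₂ φ w Q * j (mk v) ^ e = 0 := by
    have hjS := congrArg j hSz
    rw [hS, map_sum, map_zero] at hjS
    rw [hQdef, Polynomial.eval₂_finset_sum, Finset.sum_mul, ← hjS]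
    refine Finset.sum_congr rfl fun m hm => ?_
    rw [Polynomial.eval₂_mul, Polynomial.eval₂_C, Polynomial.eval₂_pow, Polynomial.eval₂_X]
    rw [mul_assoc, hw, aux_div_pow _ _ hjv (he m hm)]
    simp only [map_mul, map_pow, hφ, RingHom.comp_apply]
    ring
  have hQw : Polynomial.eval₂ φ w Q = 0 :=
    (mul_eq_zero.mp heval).resolve_right (pow_ne_zero _ hjv)
  have hmap0 : Q.map φ ≠ 0 := Polynomial.map_ne_zero hQ
  have hwroot : w ∈ (Q.map φ).roots := by
    rw [Polynomial.mem_roots hmap0, Polynomial.IsRoot, Polynomial.eval_map]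
    exact hQw
  rw [(IsAlgClosed.splits Q).roots_map φ] at hwroot
  obtain ⟨r, -, hr⟩ := Multiset.mem_map.mp hwroot
  refine ⟨r, ?_, hFv⟩
  rw [← hmem]
  apply hj
  rw [map_zero]
  have hju : j (mk u) = φ r * j (mk v) := by
    rw [hr, hw, div_mul_cancel₀ _ hjv]
  calc j (mk (u - C r * v)) = j (mk u) - φ r * j (mk v) := by
        simp only [map_sub, map_mul, hφ, RingHom.comp_apply]
    _ = 0 := by rw [hju, sub_self]

lemma pencil_eq {K : Type*} [Field K] (p q F : MvPolynomial (Fin 2) K)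
    (hpq : IsRelPrime p q) (hF : Irreducible F) {l₁ l₂ : Option K}
    (h1 : F ∣ pencil p q l₁) (h2 : F ∣ pencil p q l₂) : l₁ = l₂ := by
  by_contra hne
  have hCq : ∀ a : K, a ≠ 0 → F ∣ C a * q → F ∣ q := by
    intro a ha h
    have : q = C a⁻¹ * (C a * q) := by
      rw [← mul_assoc, ← C_mul, inv_mul_cancel₀ ha, C_1, one_mul]
    rw [this]
    exact h.mul_left _
  have hpfromq : ∀ l : K, F ∣ p - C l * q → F ∣ q → F ∣ p := by
    intro l h hq
    have : p = (p - C l * q) + C l * q := by ring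
    rw [this]
    exact dvd_add h (hq.mul_left _)
  have hkey : F ∣ q ∧ F ∣ p := by
    match l₁, l₂ with
    | none, none => exact absurd rfl hne
    | none, some l =>
      exact ⟨h1, hpfromq l h2 h1⟩
    | some l, none =>
      exact ⟨h2, hpfromq l h1 h2⟩
    | some l₁', some l₂' =>
      have hll : l₂' - l₁' ≠ 0 := sub_ne_zero.mpr fun h => hne (by rw [h])
      have hdq : F ∣ C (l₂' - l₁') * q := by
        have : C (l₂' - l₁') * q = (p - C l₁' * q) - (p - C l₂' * q) := by
          rw [C_sub]; ring
        rw [this]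
        exact dvd_sub h1 h2
      have hq := hCq _ hll hdq
      exact ⟨hq, hpfromq l₁' h1 hq⟩
  exact hF.not_isUnit (hpq hkey.2 hkey.1)

set_option maxHeartbeats 2000000 in
theorem stmt9 {K : Type*} [Field K] [IsAlgClosed K] [CharZero K]
    (p q u v : MvPolynomial (Fin 2) K) (hpq : IsRelPrime p q) (hq : q ≠ 0)
    (huv : IsRelPrime u v) (hv : v ≠ 0)
    (hdep : ¬ AlgebraicIndependent K
      ![algebraMap (MvPolynomial (Fin 2) K) (Lf 2 K) p /
          algebraMap (MvPolynomial (Fin 2) K) (Lf 2 K) q,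
        algebraMap (MvPolynomial (Fin 2) K) (Lf 2 K) u /
          algebraMap (MvPolynomial (Fin 2) K) (Lf 2 K) v]) :
    {l : Option K | ∃ F, Irreducible F ∧ F ∣ pencil p q l ∧ ¬ constOn u v F}.Finite := by
  classical
  set ι := algebraMap (MvPolynomial (Fin 2) K) (Lf 2 K) with hι
  obtain ⟨P, hPz, hP0⟩ : ∃ P : MvPolynomial (Fin 2) K,
      (aeval ![ι p / ι q, ι u / ι v]) P = 0 ∧ P ≠ 0 := by
    rw [algebraicIndependent_iff] at hdep
    push_neg at hdep
    exact hdep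
  set d := P.support.sup fun m => m 0 with hdd
  set e := P.support.sup fun m => m 1 with hee
  have hd : ∀ m ∈ P.support, m 0 ≤ d := fun m hm => Finset.le_sup (f := fun m => m 0) hm
  have he : ∀ m ∈ P.support, m 1 ≤ e := fun m hm => Finset.le_sup (f := fun m => m 1) hm
  have hinj : Function.Injective ι := IsFractionRing.injective _ _
  have hιq : ι q ≠ 0 := fun h => hq (hinj (by rw [h, map_zero]))
  have hιv : ι v ≠ 0 := fun h => hv (hinj (by rw [h, map_zero]))
  -- the cleared-denominators identity
  have hH : ∑ m ∈ P.support,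
      C (coeff m P) * p ^ (m 0) * q ^ (d - m 0) * u ^ (m 1) * v ^ (e - m 1) = 0 := by
    apply hinj
    rw [map_zero, map_sum]
    have expand := hPz
    rw [aeval_def, eval₂_eq'] at expand
    calc ∑ m ∈ P.support, ι (C (coeff m P) * p ^ m 0 * q ^ (d - m 0) * u ^ m 1 * v ^ (e - m 1))
        = (ι q ^ d * ι v ^ e) * ∑ m ∈ P.support, algebraMap K (Lf 2 K) (coeff m P) *
            ∏ i, (![ι p / ι q, ι u / ι v]) i ^ m i := by
          rw [Finset.mul_sum]
          refine Finset.sum_congr rfl fun m hm => ?_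
          rw [Fin.prod_univ_two]
          simp only [Matrix.cons_val_zero, Matrix.cons_val_one, Matrix.head_cons]
          rw [map_mul, map_mul, map_mul, map_mul, map_pow, map_pow, map_pow, map_pow]
          have hc : (algebraMap K (Lf 2 K)) (coeff m P) = ι (C (coeff m P)) := by
            rw [hι, ← MvPolynomial.algebraMap_eq, ← IsScalarTower.algebraMap_apply]
          rw [← hc]
          rw [show (ι q ^ d * ι v ^ e) *
              ((algebraMap K (Lf 2 K)) (coeff m P) * ((ι p / ι q) ^ m 0 * (ι u / ι v) ^ m 1))
              = (algebraMap K (Lf 2 K)) (coeff m P) * ((ι p / ι q) ^ m 0 * ι q ^ d) *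
                ((ι u / ι v) ^ m 1 * ι v ^ e) from by ring]
          rw [aux_div_pow _ _ hιq (hd m hm), aux_div_pow _ _ hιv (he m hm)]
          ring
      _ = 0 := by rw [expand, mul_zero]
  -- the nonzero coefficient polynomial A
  obtain ⟨mst, hmst⟩ := MvPolynomial.support_nonempty.mpr hP0
  set A : Polynomial K := ∑ m ∈ P.support.filter (fun m => m 1 = mst 1),
      Polynomial.C (coeff m P) * Polynomial.X ^ (m 0) with hA
  have hA0 : A ≠ 0 := by
    intro h
    have hco : A.coeff (mst 0) = coeff mst P := by
      rw [hA, Polynomial.finset_sum_coeff, Finset.sum_eq_single mst]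
      · rw [Polynomial.coeff_C_mul, Polynomial.coeff_X_pow, if_pos rfl, mul_one]
      · intro b hb hbne
        rw [Polynomial.coeff_C_mul, Polynomial.coeff_X_pow]
        rw [if_neg, mul_zero]
        intro hb0
        apply hbne
        have hb1 := (Finset.mem_filter.mp hb).2
        ext i
        fin_cases i
        · exact hb0.symm
        · exact hb1
      · intro hnotmem
        exact absurd (show mst ∈ P.support.filter (fun m => m 1 = mst 1) from
          Finset.mem_filter.mpr ⟨hmst, rfl⟩) hnotmem
    rw [h, Polynomial.coeff_zero] at hco
    exact (mem_support_iff.mp hmst) hco.symm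
  have hQcoeff : ∀ l : K,
      (∑ m ∈ P.support, Polynomial.C (coeff m P * l ^ (m 0)) * Polynomial.X ^ (m 1)).coeff (mst 1)
        = A.eval l := by
    intro l
    rw [hA, Polynomial.eval_finset_sum, Polynomial.finset_sum_coeff, Finset.sum_filter]
    refine Finset.sum_congr rfl fun m hm => ?_
    rw [Polynomial.coeff_C_mul, Polynomial.coeff_X_pow]
    by_cases h : m 1 = mst 1
    · simp [h]
    · simp [h, Ne.symm h]
  -- the bad set
  have hBad2 : {l : Option K | ∃ F, Irreducible F ∧ F ∣ v ∧ F ∣ pencil p q l}.Finite := by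
    have hsub : {l : Option K | ∃ F, Irreducible F ∧ F ∣ v ∧ F ∣ pencil p q l} ⊆
        ⋃ F ∈ ((UniqueFactorizationMonoid.factors v).toFinset :
          Set (MvPolynomial (Fin 2) K)), {l : Option K | F ∣ pencil p q l} := by
      rintro l ⟨F, hF, hFv, hFd⟩
      obtain ⟨F', hF'mem, hassoc⟩ :=
        UniqueFactorizationMonoid.exists_mem_factors_of_dvd hv hF hFv
      exact Set.mem_biUnion (Multiset.mem_toFinset.mpr hF'mem) (hassoc.symm.dvd.trans hFd)
    refine Set.Finite.subset (Set.Finite.biUnion (Finset.finite_toSet _) fun F hF => ?_) hsub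
    apply Set.Subsingleton.finite
    intro l₁ h₁ l₂ h₂
    exact pencil_eq p q F hpq
      (UniqueFactorizationMonoid.irreducible_of_factor F (Multiset.mem_toFinset.mp hF)) h₁ h₂
  refine Set.Finite.subset (Set.Finite.insert none
    ((((Polynomial.finite_setOf_isRoot hA0).image some).union hBad2))) ?_
  rintro l ⟨F, hF, hFd, hnc⟩
  match l with
  | none => exact Set.mem_insert _ _
  | some l =>
    refine Set.mem_insert_of_mem _ ?_
    by_cases hB2 : (some l : Option K) ∈ {l : Option K | ∃ F, Irreducible F ∧ F ∣ v ∧ F ∣ pencil p q l}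
    · exact Or.inr hB2
    · refine Or.inl ⟨l, ?_, rfl⟩
      by_contra hroot
      apply hnc
      have hFd' : F ∣ p - C l * q := hFd
      have hFv : ¬ F ∣ v := fun h => hB2 ⟨F, hF, h, hFd⟩
      have hFq : ¬ F ∣ q := by
        intro h
        have hFp : F ∣ p := by
          have : p = (p - C l * q) + C l * q := by ring
          rw [this]
          exact dvd_add hFd' (h.mul_left _)
        exact hF.not_isUnit (hpq hFp h)
      refine key_dvd p q u v F l hF hFd' hFq hFv P.support (fun m => coeff m P) d e hd he hH ?_
      intro hzero
      apply hroot
      show A.eval l = 0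
      rw [← hQcoeff l, hzero, Polynomial.coeff_zero]


end
end

section
/- Let K be an algebraically closed field of characteristic 0 and f = p/q ∈ K(x,y) with gcd(p,q) = 1. If g ∈ K(x,y) is constant on infinitely many irreducible components of curves (p − λq = 0), λ ranging over K ∪ {∞}, then D_f(g) = 0, i.e., f and g are algebraically dependent. -/
open MvPolynomial

noncomputable section
variable {K : Type*} [Field K]

lemma key_det {R : Type*} [CommRing R] (F G₀ G₁ w z a₀ a₁ b₀ b₁ A₀ A₁ B₀ B₁ : R)
    (h₀ : A₀ = w * G₀ + F * a₀) (h₁ : A₁ = w * G₁ + F * a₁)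
    (h₂ : B₀ = z * G₀ + F * b₀) (h₃ : B₁ = z * G₁ + F * b₁) :
    F ∣ A₀ * B₁ - A₁ * B₀ :=
  ⟨w * G₀ * b₁ + z * G₁ * a₀ + F * a₀ * b₁ - w * G₁ * b₀ - z * G₀ * a₁ - F * a₁ * b₀, by
    subst h₀ h₁ h₂ h₃; ring⟩

lemma pencil_two {p q F : MvPolynomial (Fin 2) K} (hpq : IsRelPrime p q) (hF : Irreducible F)
    {l l' : Option K} (hne : l ≠ l') (h1 : F ∣ pencil p q l) (h2 : F ∣ pencil p q l') : False := by
  have hqp : F ∣ q → F ∣ p → False := fun h h' => hF.not_isUnit (hpq h' h)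
  match l, l' with
  | none, none => exact hne rfl
  | none, some m =>
      refine hqp h1 ?_
      have : F ∣ (p - C m * q) + C m * q := dvd_add h2 (h1.mul_left _)
      simpa using this
  | some m, none =>
      refine hqp h2 ?_
      have : F ∣ (p - C m * q) + C m * q := dvd_add h1 (h2.mul_left _)
      simpa using this
  | some l, some m =>
      have hlm : l ≠ m := fun h => hne (by rw [h])
      have hdq : F ∣ C (m - l) * q := by
        have h3 : (p - C l * q) - (p - C m * q) = C (m - l) * q := by
          rw [map_sub]; ring
        rw [← h3]; exact dvd_sub h1 h2
      have hu : IsUnit (C (m - l) : MvPolynomial (Fin 2) K) :=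
        (sub_ne_zero.mpr (Ne.symm hlm)).isUnit.map (C : K →+* MvPolynomial (Fin 2) K)
      have hdq' : F ∣ q := hu.dvd_mul_left.mp hdq
      refine hqp hdq' ?_
      have : F ∣ (p - C l * q) + C l * q := dvd_add h1 (hdq'.mul_left _)
      simpa using this

lemma dvd_det {p q u v F : MvPolynomial (Fin 2) K} {l : Option K}
    (h1 : F ∣ pencil p q l) (h2 : constOn u v F) :
    F ∣ (q * pderiv 0 p - p * pderiv 0 q) * (v * pderiv 1 u - u * pderiv 1 v)
      - (q * pderiv 1 p - p * pderiv 1 q) * (v * pderiv 0 u - u * pderiv 0 v) := by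
  obtain ⟨c, ⟨k, hk⟩, -⟩ := h2
  have hu : u = C c * v + F * k := by linear_combination hk
  have hB : ∀ i : Fin 2, v * pderiv i u - u * pderiv i v
      = (v * k) * pderiv i F + F * (v * pderiv i k - k * pderiv i v) := by
    intro i
    rw [hu]
    simp only [map_add, pderiv_mul, pderiv_C, zero_mul, zero_add]
    ring
  match l with
  | some lam =>
    obtain ⟨h, hh⟩ : F ∣ p - C lam * q := h1
    have hp : p = C lam * q + F * h := by linear_combination hh
    have hA : ∀ i : Fin 2, q * pderiv i p - p * pderiv i q
        = (q * h) * pderiv i F + F * (q * pderiv i h - h * pderiv i q) := by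
      intro i
      rw [hp]
      simp only [map_add, pderiv_mul, pderiv_C, zero_mul, zero_add]
      ring
    exact key_det F (pderiv 0 F) (pderiv 1 F) (q * h) (v * k) _ _ _ _ _ _ _ _
      (hA 0) (hA 1) (hB 0) (hB 1)
  | none =>
    obtain ⟨h, hh⟩ : F ∣ q := h1
    have hA : ∀ i : Fin 2, q * pderiv i p - p * pderiv i q
        = (-(p * h)) * pderiv i F + F * (h * pderiv i p - p * pderiv i h) := by
      intro i
      rw [hh]
      simp only [pderiv_mul]
      ring
    exact key_det F (pderiv 0 F) (pderiv 1 F) (-(p * h)) (v * k) _ _ _ _ _ _ _ _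
      (hA 0) (hA 1) (hB 0) (hB 1)

theorem stmt10' {K : Type*} [Field K] [IsAlgClosed K] [CharZero K]
    (p q u v : MvPolynomial (Fin 2) K) (hpq : IsRelPrime p q) (hq : q ≠ 0)
    (huv : IsRelPrime u v) (hv : v ≠ 0)
    (hinf : {l : Option K | ∃ F, Irreducible F ∧ F ∣ pencil p q l ∧ constOn u v F}.Infinite) :
    (q * pderiv 0 p - p * pderiv 0 q) * (v * pderiv 1 u - u * pderiv 1 v)
      = (q * pderiv 1 p - p * pderiv 1 q) * (v * pderiv 0 u - u * pderiv 0 v) := by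
  classical
  rw [← sub_eq_zero]
  by_contra hD
  set D := (q * pderiv 0 p - p * pderiv 0 q) * (v * pderiv 1 u - u * pderiv 1 v)
      - (q * pderiv 1 p - p * pderiv 1 q) * (v * pderiv 0 u - u * pderiv 0 v) with hDdef
  set S := {l : Option K | ∃ F, Irreducible F ∧ F ∣ pencil p q l ∧ constOn u v F} with hS
  have Φspec : ∀ l : S, Irreducible l.2.choose ∧ l.2.choose ∣ pencil p q l.1 ∧
      constOn u v l.2.choose := fun l => l.2.choose_spec
  have hdvdD : ∀ l : S, l.2.choose ∣ D :=
    fun l => dvd_det (Φspec l).2.1 (Φspec l).2.2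
  have hex : ∀ l : S, ∃ g ∈ UniqueFactorizationMonoid.factors D, Associated l.2.choose g :=
    fun l => UniqueFactorizationMonoid.exists_mem_factors_of_dvd hD (Φspec l).1 (hdvdD l)
  let ψ : S → {g // g ∈ (UniqueFactorizationMonoid.factors D).toFinset} :=
    fun l => ⟨(hex l).choose, by simp [Multiset.mem_toFinset, (hex l).choose_spec.1]⟩
  have hinj : Function.Injective ψ := by
    intro l₁ l₂ hψ
    by_contra hne
    have hne' : l₁.1 ≠ l₂.1 := fun h => hne (Subtype.ext h)
    have hg : (hex l₁).choose = (hex l₂).choose := congrArg Subtype.val hψ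
    have ha : Associated l₁.2.choose l₂.2.choose :=
      ((hex l₁).choose_spec.2.trans (hg ▸ (hex l₂).choose_spec.2.symm))
    have hdvd2 : l₁.2.choose ∣ pencil p q l₂.1 := ha.dvd.trans (Φspec l₂).2.1
    exact pencil_two hpq (Φspec l₁).1 hne' (Φspec l₁).2.1 hdvd2
  have : Finite S := Finite.of_injective ψ hinj
  exact hinf (Set.finite_coe_iff.mp this)


theorem stmt10 {K : Type*} [Field K] [IsAlgClosed K] [CharZero K]
    (p q u v : MvPolynomial (Fin 2) K) (hpq : IsRelPrime p q) (hq : q ≠ 0)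
    (huv : IsRelPrime u v) (hv : v ≠ 0)
    (hinf : {l : Option K | ∃ F, Irreducible F ∧ F ∣ pencil p q l ∧ constOn u v F}.Infinite) :
    jacZero p q u v := stmt10' p q u v hpq hq huv hv hinf

end
end

section
/- Let K be an algebraically closed field of characteristic 0, f = p/q ∈ K(x,y) non-composite with gcd(p,q)=1, and suppose g = ∏ F_{i,j}^{m_{i,j}} ∈ K(f), where the F_{i,j} range over all but one irreducible factor of each p − λᵢq (λᵢ ∈ σ(f)) and not all m_{i,j} are zero. Then a contradiction follows; equivalently, no nontrivial monomial in such proper subfamilies of irreducible factors lies in K(f). -/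
set_option linter.unusedSectionVars false
set_option linter.unusedVariables false
set_option maxHeartbeats 1000000

section Nu
open UniqueFactorizationMonoid
variable {α : Type*} [CommMonoidWithZero α] [UniqueFactorizationMonoid α]
  [NormalizationMonoid α] [DecidableEq α] [Nontrivial α]

noncomputable def nuu (G x : α) : ℕ := Multiset.count (normalize G) (normalizedFactors x)

variable {G : α}

theorem nuu_mul {a b : α} (ha : a ≠ 0) (hb : b ≠ 0) : nuu G (a*b) = nuu G a + nuu G b := by
  unfold nuu; rw [normalizedFactors_mul ha hb, Multiset.count_add]

theorem nuu_pow (a : α) (n : ℕ) : nuu G (a^n) = n * nuu G a := by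
  unfold nuu; rw [normalizedFactors_pow, Multiset.count_nsmul]

theorem nuu_irred_assoc {F : α} (hF : Irreducible F) (h : Associated G F) :
    nuu G F = 1 := by
  unfold nuu
  rw [normalizedFactors_irreducible hF, Multiset.count_singleton,
    if_pos (normalize_eq_normalize h.dvd h.symm.dvd)]

theorem nuu_irred_not_assoc {F : α} (hF : Irreducible F) (h : ¬ Associated G F) :
    nuu G F = 0 := by
  unfold nuu
  rw [normalizedFactors_irreducible hF, Multiset.count_singleton, if_neg]
  rw [normalize_eq_normalize_iff, dvd_dvd_iff_associated]
  exact h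

theorem nuu_eq_zero {x : α} (h : ¬ G ∣ x) : nuu G x = 0 := by
  rw [nuu, Multiset.count_eq_zero]
  intro hmem
  exact h ((normalize_dvd_iff).mp (dvd_of_mem_normalizedFactors hmem))

theorem nuu_pos (hG : Irreducible G) {x : α} (hx : x ≠ 0) (h : G ∣ x) : 0 < nuu G x := by
  obtain ⟨r, hr, hassoc⟩ := exists_mem_normalizedFactors_of_dvd hx hG h
  rw [nuu, Multiset.count_pos]
  have h1 : normalize G = r := by
    rw [normalize_eq_normalize hassoc.dvd hassoc.symm.dvd, normalize_normalized_factor r hr]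
  rwa [h1]

theorem nuu_one : nuu G (1 : α) = 0 := by
  unfold nuu; rw [normalizedFactors_one]; simp

theorem nuu_prod {ι : Type*} (S : Finset ι) (f : ι → α) (h : ∀ i ∈ S, f i ≠ 0) :
    nuu G (∏ i ∈ S, f i) = ∑ i ∈ S, nuu G (f i) := by
  classical
  induction S using Finset.cons_induction with
  | empty => simpa using nuu_one
  | cons a s ha ih =>
    rw [Finset.prod_cons, Finset.sum_cons,
      nuu_mul (h a (Finset.mem_cons_self a s))
        (Finset.prod_ne_zero_iff.mpr fun i hi => h i (Finset.mem_cons_of_mem hi)),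
      ih fun i hi => h i (Finset.mem_cons_of_mem hi)]

theorem nuu_multiset_prod (s : Multiset α) (h : ∀ x ∈ s, x ≠ 0) :
    nuu G s.prod = (s.map (nuu G)).sum := by
  induction s using Multiset.induction with
  | empty => simpa using nuu_one
  | cons a t ih =>
    rw [Multiset.prod_cons, Multiset.map_cons, Multiset.sum_cons,
      nuu_mul (h a (Multiset.mem_cons_self a t))
        (by rw [Ne, Multiset.prod_eq_zero_iff]; intro h0; exact h 0 (Multiset.mem_cons_of_mem h0) rfl),
      ih fun x hx => h x (Multiset.mem_cons_of_mem hx)]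

end Nu

theorem sum_map_ite {β : Type*} [DecidableEq β] (s : Multiset β) (a : β) (k : ℕ) :
    (s.map (fun l => if l = a then k else 0)).sum = k * s.count a := by
  induction s using Multiset.induction with
  | empty => simp
  | cons x t ih =>
    rw [Multiset.map_cons, Multiset.sum_cons, ih, Multiset.count_cons]
    rcases eq_or_ne x a with rfl | hx
    · simp [Nat.mul_succ]
      omega
    · simp [hx, Ne.symm hx]



open MvPolynomial

noncomputable section
variable {K : Type*} [Field K]

theorem key_clear {K : Type*} [Field K] [IsAlgClosed K] (p q : MvPolynomial (Fin 2) K)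
    (hq : algebraMap (MvPolynomial (Fin 2) K) (Lf 2 K) q ≠ 0)
    (w : Polynomial K) :
    Polynomial.eval₂ (ratι 2 K)
        (algebraMap (MvPolynomial (Fin 2) K) (Lf 2 K) p / algebraMap (MvPolynomial (Fin 2) K) (Lf 2 K) q) w
        * (algebraMap (MvPolynomial (Fin 2) K) (Lf 2 K) q) ^ w.natDegree
      = algebraMap (MvPolynomial (Fin 2) K) (Lf 2 K) (C w.leadingCoeff *
          ((w.roots.map (fun l => p - C l * q)).prod)) := by
  set φ := algebraMap (MvPolynomial (Fin 2) K) (Lf 2 K) with hφ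
  set f := φ p / φ q with hf
  have hsplit := (IsAlgClosed.splits w).eq_prod_roots
  have hcard : Multiset.card w.roots = w.natDegree :=
    (Polynomial.splits_iff_card_roots).mp (IsAlgClosed.splits w)
  set d := w.natDegree with hd
  conv_lhs => rw [hsplit]
  rw [← Polynomial.coe_eval₂RingHom, map_mul, map_multiset_prod, Multiset.map_map]
  simp only [Function.comp_def]
  have e1 : ∀ a : K, (Polynomial.eval₂RingHom (ratι 2 K) f) (Polynomial.X - Polynomial.C a)
      = f - ratι 2 K a := by
    intro a
    rw [map_sub]
    simp [Polynomial.coe_eval₂RingHom]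
  rw [Multiset.map_congr rfl (fun a _ => e1 a)]
  rw [map_mul, map_multiset_prod, Multiset.map_map, ← hcard]
  have e2 : φ q ^ Multiset.card w.roots = (w.roots.map (fun _ => φ q)).prod := by
    rw [Multiset.map_const', Multiset.prod_replicate]
  rw [mul_assoc, e2, ← Multiset.prod_map_mul]
  have e3 : (Polynomial.eval₂RingHom (ratι 2 K) f) (Polynomial.C w.leadingCoeff)
      = φ (C w.leadingCoeff) := by
    simp [Polynomial.coe_eval₂RingHom, ratι]; rfl
  rw [e3]
  congr 1
  refine congrArg Multiset.prod (Multiset.map_congr rfl fun a _ => ?_)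
  show (f - ratι 2 K a) * φ q = φ (p - C a * q)
  rw [sub_mul, hf, div_mul_cancel₀ _ hq, map_sub, map_mul]
  rfl

theorem stmt19 {K : Type*} [Field K] [IsAlgClosed K] [CharZero K]
    (p q : MvPolynomial (Fin 2) K) (hpq : IsRelPrime p q) (hq : q ≠ 0)
    (hnc : ¬ IsComposite (algebraMap (MvPolynomial (Fin 2) K) (Lf 2 K) p /
      algebraMap (MvPolynomial (Fin 2) K) (Lf 2 K) q))
    (S : Finset (MvPolynomial (Fin 2) K))
    (hirr : ∀ F ∈ S, Irreducible F)
    (hdvd : ∀ F ∈ S, ∃ l : Option K, F ∣ pencil p q l)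
    (hpair : (S : Set (MvPolynomial (Fin 2) K)).Pairwise fun a b => ¬ Associated a b)
    (homit : ∀ l : Option K, ∃ G, Irreducible G ∧ G ∣ pencil p q l ∧
      ∀ F ∈ S, ¬ Associated F G)
    (m : MvPolynomial (Fin 2) K → ℤ) (hm : ∃ F ∈ S, m F ≠ 0) :
    (∏ F ∈ S, (algebraMap (MvPolynomial (Fin 2) K) (Lf 2 K) F) ^ (m F)) ∉
      Subfield.closure (Set.range (ratι 2 K) ∪
        {algebraMap (MvPolynomial (Fin 2) K) (Lf 2 K) p /
          algebraMap (MvPolynomial (Fin 2) K) (Lf 2 K) q}) := by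
  classical
  letI : NormalizationMonoid (MvPolynomial (Fin 2) K) :=
    UniqueFactorizationMonoid.strongNormalizationMonoid.toNormalizationMonoid
  intro hg
  set φ := algebraMap (MvPolynomial (Fin 2) K) (Lf 2 K) with hφdef
  have hφinj : Function.Injective φ := IsFractionRing.injective _ _
  have hφ0 : ∀ x : MvPolynomial (Fin 2) K, x ≠ 0 → φ x ≠ 0 := fun x hx h0 =>
    hx (hφinj (by rw [h0, map_zero]))
  -- basic nonvanishing
  obtain ⟨G0, hG0irr, hG0dvd, -⟩ := homit none
  have hqnu : ¬ IsUnit q := fun h => hG0irr.not_isUnit (isUnit_of_dvd_unit hG0dvd h)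
  have hpencil0 : ∀ l, pencil p q l ≠ 0 := by
    intro l h0
    cases l with
    | none => exact hq h0
    | some a =>
      have hpa : p = C a * q := by rwa [pencil, sub_eq_zero] at h0
      exact hqnu (hpq ⟨C a, by rw [hpa, mul_comm]⟩ dvd_rfl)
  -- an irreducible cannot divide two distinct pencil members
  have hbase : ∀ H : MvPolynomial (Fin 2) K, Irreducible H → H ∣ q →
      ∀ a : K, H ∣ p - C a * q → False := by
    intro H hH hHq a hHa
    have hHp : H ∣ p := by
      have := dvd_add hHa (Dvd.dvd.mul_left hHq (C a))
      rwa [sub_add_cancel] at this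
    exact hH.not_isUnit (hpq hHp hHq)
  have hcross : ∀ H : MvPolynomial (Fin 2) K, Irreducible H → ∀ l l', H ∣ pencil p q l →
      H ∣ pencil p q l' → l = l' := by
    intro H hH l l' hl hl'
    cases l with
    | none => cases l' with
      | none => rfl
      | some a => exact (hbase H hH hl a hl').elim
    | some a => cases l' with
      | none => exact (hbase H hH hl' a hl).elim
      | some b =>
        by_cases hab : a = b
        · rw [hab]
        · exfalso
          have hdiff : H ∣ C (a - b) * q := by
            have h2 : C (a - b) * q = (p - C b * q) - (p - C a * q) := by
              rw [map_sub]; ring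
            rw [h2]
            exact dvd_sub hl' hl
          have hCu : IsUnit (C (a - b) : MvPolynomial (Fin 2) K) :=
            (isUnit_iff_ne_zero.mpr (sub_ne_zero.mpr hab)).map (C : K →+* MvPolynomial (Fin 2) K)
          have hHq : H ∣ q := (IsUnit.dvd_mul_left hCu).mp hdiff
          exact hbase H hH hHq a hl
  -- extract rational representation
  rw [Subfield.mem_closure_iff] at hg
  obtain ⟨A, hA, B, hB, hABg⟩ := hg
  have hsub : Subring.closure (Set.range (ratι 2 K) ∪ {φ p / φ q}) ≤
      (Polynomial.eval₂RingHom (ratι 2 K) (φ p / φ q)).range := by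
    rw [Subring.closure_le]
    rintro x hx
    simp only [Set.mem_union, Set.mem_range, Set.mem_singleton_iff] at hx
    obtain ⟨c, rfl⟩ | rfl := hx
    · exact ⟨Polynomial.C c, Polynomial.eval₂_C _ _⟩
    · exact ⟨Polynomial.X, Polynomial.eval₂_X _ _⟩
  obtain ⟨u, hu⟩ := hsub hA
  obtain ⟨v, hv⟩ := hsub hB
  set g := ∏ F ∈ S, φ F ^ m F with hgdef
  have hSne : ∀ F ∈ S, φ F ≠ 0 := fun F hF => hφ0 F (hirr F hF).ne_zero
  have hg0 : g ≠ 0 := Finset.prod_ne_zero_iff.mpr fun F hF => zpow_ne_zero _ (hSne F hF)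
  have hB0 : B ≠ 0 := fun h => hg0 (by rw [← hABg, h, div_zero])
  have hAB : A = g * B := by rw [← hABg, div_mul_cancel₀ _ hB0]
  have hA0 : A ≠ 0 := hAB ▸ mul_ne_zero hg0 hB0
  have hu' : Polynomial.eval₂ (ratι 2 K) (φ p / φ q) u = A := hu
  have hv' : Polynomial.eval₂ (ratι 2 K) (φ p / φ q) v = B := hv
  have hu0 : u ≠ 0 := fun h => hA0 (by rw [← hu', h, Polynomial.eval₂_zero])
  have hv0 : v ≠ 0 := fun h => hB0 (by rw [← hv', h, Polynomial.eval₂_zero])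
  -- the integer-exponent product as a quotient of genuine products
  set Mp := ∏ F ∈ S, F ^ (m F).toNat with hMp
  set Mn := ∏ F ∈ S, F ^ (-(m F)).toNat with hMn
  have hgMn : g * φ Mn = φ Mp := by
    rw [hMn, hMp, map_prod, map_prod, hgdef, ← Finset.prod_mul_distrib]
    refine Finset.prod_congr rfl fun F hF => ?_
    rw [map_pow, map_pow, ← zpow_natCast (φ F) ((-(m F)).toNat),
      ← zpow_natCast (φ F) ((m F).toNat), ← zpow_add₀ (hSne F hF)]
    congr 1
    omega
  -- main identity in the polynomial ring
  set Qu := (u.roots.map (fun l => p - C l * q)).prod with hQu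
  set Qv := (v.roots.map (fun l => p - C l * q)).prod with hQv
  have hEu := key_clear p q (hφ0 q hq) u
  have hEv := key_clear p q (hφ0 q hq) v
  rw [← hQu, map_mul] at hEu
  rw [← hQv, map_mul] at hEv
  have hbig : φ Mn * (φ (C u.leadingCoeff) * φ Qu) * φ q ^ v.natDegree
      = φ Mp * (φ (C v.leadingCoeff) * φ Qv) * φ q ^ u.natDegree := by
    rw [← hEu, ← hEv, hu', hv', hAB, ← hgMn]
    ring
  have hR : Mn * (C u.leadingCoeff * Qu) * q ^ v.natDegree
      = Mp * (C v.leadingCoeff * Qv) * q ^ u.natDegree := by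
    apply hφinj
    simp only [map_mul, map_pow]
    exact hbig
  -- choose the distinguished fiber and its omitted factor
  obtain ⟨F₀, hF₀S, hm0⟩ := hm
  obtain ⟨l₀, hF₀l⟩ := hdvd F₀ hF₀S
  obtain ⟨G, hGirr, hGdvd, hGnot⟩ := homit l₀
  have hF₀irr := hirr F₀ hF₀S
  -- nonzeroness of all the factors
  have hlcu : (C u.leadingCoeff : MvPolynomial (Fin 2) K) ≠ 0 := by
    rw [Ne, C_eq_zero]; exact Polynomial.leadingCoeff_ne_zero.mpr hu0
  have hlcv : (C v.leadingCoeff : MvPolynomial (Fin 2) K) ≠ 0 := by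
    rw [Ne, C_eq_zero]; exact Polynomial.leadingCoeff_ne_zero.mpr hv0
  have hQmem : ∀ (w : Polynomial K) (x : MvPolynomial (Fin 2) K),
      x ∈ w.roots.map (fun l => p - C l * q) → x ≠ 0 := by
    intro w x hx
    obtain ⟨l, -, rfl⟩ := Multiset.mem_map.mp hx
    exact hpencil0 (some l)
  have hQu0 : Qu ≠ 0 := by
    rw [hQu, Ne, Multiset.prod_eq_zero_iff]
    intro h0; exact hQmem u 0 h0 rfl
  have hQv0 : Qv ≠ 0 := by
    rw [hQv, Ne, Multiset.prod_eq_zero_iff]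
    intro h0; exact hQmem v 0 h0 rfl
  have hMn0 : Mn ≠ 0 :=
    Finset.prod_ne_zero_iff.mpr fun F hF => pow_ne_zero _ (hirr F hF).ne_zero
  have hMp0 : Mp ≠ 0 :=
    Finset.prod_ne_zero_iff.mpr fun F hF => pow_ne_zero _ (hirr F hF).ne_zero
  -- counting the multiplicity of H on both sides
  have expand : ∀ (H : MvPolynomial (Fin 2) K) (M lc Q : MvPolynomial (Fin 2) K) (n : ℕ),
      M ≠ 0 → lc ≠ 0 → Q ≠ 0 →
      nuu H (M * (lc * Q) * q ^ n) = nuu H M + (nuu H lc + nuu H Q) + n * nuu H q := by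
    intro H M lc Q n hM hlc hQ
    rw [nuu_mul (mul_ne_zero hM (mul_ne_zero hlc hQ)) (pow_ne_zero _ hq),
      nuu_mul hM (mul_ne_zero hlc hQ), nuu_mul hlc hQ, nuu_pow]
  have hlcnuu : ∀ (H : MvPolynomial (Fin 2) K), Irreducible H → ∀ c : K, c ≠ 0 →
      nuu H (C c : MvPolynomial (Fin 2) K) = 0 := by
    intro H hH c hc
    exact nuu_eq_zero fun hdvd =>
      hH.not_isUnit (isUnit_of_dvd_unit hdvd
        ((isUnit_iff_ne_zero.mpr hc).map (C : K →+* MvPolynomial (Fin 2) K)))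
  -- value of nuu H on the Q-products, for H dividing the distinguished fiber
  have hQval : ∀ (H : MvPolynomial (Fin 2) K), Irreducible H → H ∣ pencil p q l₀ →
      ∀ w : Polynomial K,
      nuu H ((w.roots.map (fun l => p - C l * q)).prod)
        = nuu H (pencil p q l₀) *
            (match l₀ with | none => 0 | some a => w.roots.count a) := by
    intro H hH hHl w
    rw [nuu_multiset_prod _ (hQmem w), Multiset.map_map]
    simp only [Function.comp_def]
    cases l₀ with
    | none =>
      have h1 : ∀ l : K, nuu H (p - C l * q) = 0 := fun l =>
        nuu_eq_zero fun hdvd => by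
          have := hcross H hH (some l) none hdvd hHl
          simp at this
      rw [Multiset.map_congr rfl (fun a _ => h1 a)]
      simp
    | some a =>
      have h1 : ∀ l : K, nuu H (p - C l * q)
          = if l = a then nuu H (pencil p q (some a)) else 0 := by
        intro l
        by_cases hl : l = a
        · subst hl; rw [if_pos rfl]; rfl
        · rw [if_neg hl]
          exact nuu_eq_zero fun hdvd => hl (by
            have := hcross H hH (some l) (some a) hdvd hHl
            injection this)
      rw [Multiset.map_congr rfl (fun x _ => h1 x), sum_map_ite]
  have hqval : ∀ (H : MvPolynomial (Fin 2) K), Irreducible H → H ∣ pencil p q l₀ →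
      nuu H q = nuu H (pencil p q l₀) *
        (match l₀ with | none => 1 | some a => 0) := by
    intro H hH hHl
    cases l₀ with
    | none => show nuu H q = nuu H q * 1; rw [mul_one]
    | some a =>
      rw [mul_zero]
      exact nuu_eq_zero fun hdvd => by
        have := hcross H hH none (some a) hdvd hHl
        simp at this
  -- the two balance equations
  obtain ⟨au, av, hbalance⟩ : ∃ au av : ℕ,
      ∀ (H : MvPolynomial (Fin 2) K), Irreducible H → H ∣ pencil p q l₀ →
      nuu H Mn + nuu H (pencil p q l₀) * au
        = nuu H Mp + nuu H (pencil p q l₀) * av := by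
    refine ⟨(match l₀ with | none => 0 | some a => u.roots.count a) + v.natDegree *
        (match l₀ with | none => 1 | some a => 0),
      (match l₀ with | none => 0 | some a => v.roots.count a) + u.natDegree *
        (match l₀ with | none => 1 | some a => 0), fun H hH hHl => ?_⟩
    have h1 := congrArg (nuu H) hR
    rw [expand H Mn _ Qu v.natDegree hMn0 hlcu hQu0,
      expand H Mp _ Qv u.natDegree hMp0 hlcv hQv0,
      hlcnuu H hH u.leadingCoeff (Polynomial.leadingCoeff_ne_zero.mpr hu0),
      hlcnuu H hH v.leadingCoeff (Polynomial.leadingCoeff_ne_zero.mpr hv0),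
      hQu, hQv, hQval H hH hHl u, hQval H hH hHl v, hqval H hH hHl] at h1
    cases l₀ <;> ring_nf at h1 ⊢ <;> omega
  -- nuu of the S-products
  have hMnG : nuu G Mn = 0 := by
    rw [hMn, nuu_prod S _ (fun F hF => pow_ne_zero _ (hirr F hF).ne_zero)]
    refine Finset.sum_eq_zero fun F hF => ?_
    rw [nuu_pow, nuu_irred_not_assoc (hirr F hF) (fun h => hGnot F hF h.symm), mul_zero]
  have hMpG : nuu G Mp = 0 := by
    rw [hMp, nuu_prod S _ (fun F hF => pow_ne_zero _ (hirr F hF).ne_zero)]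
    refine Finset.sum_eq_zero fun F hF => ?_
    rw [nuu_pow, nuu_irred_not_assoc (hirr F hF) (fun h => hGnot F hF h.symm), mul_zero]
  have hMnF : nuu F₀ Mn = (-(m F₀)).toNat := by
    rw [hMn, nuu_prod S _ (fun F hF => pow_ne_zero _ (hirr F hF).ne_zero)]
    rw [Finset.sum_eq_single F₀
      (fun F hF hne => by
        rw [nuu_pow, nuu_irred_not_assoc (hirr F hF)
          (hpair (Finset.mem_coe.mpr hF₀S) (Finset.mem_coe.mpr hF) (Ne.symm hne)), mul_zero])
      (fun h => absurd hF₀S h)]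
    rw [nuu_pow, nuu_irred_assoc hF₀irr (Associated.refl _), mul_one]
  have hMpF : nuu F₀ Mp = (m F₀).toNat := by
    rw [hMp, nuu_prod S _ (fun F hF => pow_ne_zero _ (hirr F hF).ne_zero)]
    rw [Finset.sum_eq_single F₀
      (fun F hF hne => by
        rw [nuu_pow, nuu_irred_not_assoc (hirr F hF)
          (hpair (Finset.mem_coe.mpr hF₀S) (Finset.mem_coe.mpr hF) (Ne.symm hne)), mul_zero])
      (fun h => absurd hF₀S h)]
    rw [nuu_pow, nuu_irred_assoc hF₀irr (Associated.refl _), mul_one]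
  -- conclude
  have hkG : 0 < nuu G (pencil p q l₀) := nuu_pos hGirr (hpencil0 l₀) hGdvd
  have hG_eq := hbalance G hGirr hGdvd
  rw [hMnG, hMpG, zero_add, zero_add] at hG_eq
  have hcu : au = av := Nat.eq_of_mul_eq_mul_left hkG hG_eq
  have hF_eq := hbalance F₀ hF₀irr hF₀l
  rw [hMnF, hMpF, hcu] at hF_eq
  omega


end
end
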